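/- Let T be a directed tree graphical model on a finite rooted tree, and define max-messages by replacing every sum over k in the domain of X_t in the message-passing recursion (including at the root) by a maximum over k. Then for every subset Y ⊆ V of observed vertices with assignment y, the resulting root value equals the maximum of T(x) over all total assignments x whose restriction to Y equals y; i.e., max-product message passing computes the value of the MAP query. -/

import Mathlib

attribute [local instance] Classical.propDecidable

noncomputable section

/-- Indicator variable `[v]_k` relative to a partial assignment `y`
(`y v = none` means `v` is unobserved). -/
def Indicator {Var : Type} (y : Var → Option ℕ) (v : Var) (k : ℕ) : ℝ :=
  match y v with
  | none => 1
  | some i => if i = k then 1 else 0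

/-- A directed tree graphical model on a finite rooted tree: `par v` is the parent of `v`
(`none` exactly at the root), acyclicity/orientation is encoded by the strictly
increasing `rank` towards the root, each vertex `v` carries a variable with domain
`{0, …, dom v - 1}`, `Proot` is the distribution at the root and `Pcond t k j` the
conditional table `P_{par t, t}(k | j)`. -/
structure TreeGM where
  V : Type
  fintypeV : Fintype V
  decEqV : DecidableEq V
  root : V
  par : V → Option V
  par_root : par root = none
  par_of_ne_root : ∀ v, v ≠ root → par v ≠ none
  rank : V → ℕ
  rank_lt : ∀ t s, par t = some s → rank t < rank s
  dom : V → ℕ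
  dom_pos : ∀ v, 0 < dom v
  Proot : ℕ → ℝ
  Pcond : V → ℕ → ℕ → ℝ

attribute [instance] TreeGM.fintypeV TreeGM.decEqV

namespace TreeGM

/-- The parameters of the tree model are probability distributions. -/
structure IsProb (T : TreeGM) : Prop where
  root_nonneg : ∀ k, 0 ≤ T.Proot k
  root_sum : ∑ k ∈ Finset.range (T.dom T.root), T.Proot k = 1
  cond_nonneg : ∀ t k j, 0 ≤ T.Pcond t k j
  cond_sum : ∀ t s, T.par t = some s → ∀ j < T.dom s,
    ∑ k ∈ Finset.range (T.dom t), T.Pcond t k j = 1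

/-- The children of a vertex. -/
def children (T : TreeGM) (t : T.V) : Finset T.V :=
  Finset.univ.filter fun q => T.par q = some t

/-- The value `T(x)` of a total assignment `x`. -/
def val (T : TreeGM) (x : ∀ v, Fin (T.dom v)) : ℝ :=
  T.Proot (x T.root) *
    ∏ t : T.V,
      match T.par t with
      | some s => T.Pcond t (x t) (x s)
      | none => 1

/-- Sum-product message passing with fuel (never exhausted thanks to `rank_lt`):
`msgAux T y n t j` is the message `μ_{t→par t; j}` under partial assignment `y`. -/
def msgAux (T : TreeGM) (y : T.V → Option ℕ) : ℕ → T.V → ℕ → ℝ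
  | 0, _, _ => 1
  | n + 1, t, j =>
    ∑ k ∈ Finset.range (T.dom t),
      (match T.par t with
        | some _ => T.Pcond t k j
        | none => T.Proot k) *
        Indicator y t k *
        ∏ q ∈ T.children t, msgAux T y n q k

/-- The value computed at the root by leaf-to-root sum-product message passing. -/
def rootValue (T : TreeGM) (y : T.V → Option ℕ) : ℝ :=
  T.msgAux y (T.rank T.root + 1) T.root 0

/-- Max-product message passing: every sum over the domain is replaced by a maximum. -/
def maxMsgAux (T : TreeGM) (y : T.V → Option ℕ) : ℕ → T.V → ℕ → ℝ
  | 0, _, _ => 1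
  | n + 1, t, j =>
    (Finset.range (T.dom t)).sup'
      (Finset.nonempty_range_iff.mpr (T.dom_pos t).ne') fun k =>
      (match T.par t with
        | some _ => T.Pcond t k j
        | none => T.Proot k) *
        Indicator y t k *
        ∏ q ∈ T.children t, maxMsgAux T y n q k

/-- The value computed at the root by leaf-to-root max-product message passing. -/
def maxRootValue (T : TreeGM) (y : T.V → Option ℕ) : ℝ :=
  T.maxMsgAux y (T.rank T.root + 1) T.root 0

end TreeGM

namespace TreeGM

variable (T : TreeGM)

instance : Nonempty (∀ v : T.V, Fin (T.dom v)) := ⟨fun v => ⟨0, T.dom_pos v⟩⟩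

/-- Iterated parent map. -/
def parIter : ℕ → T.V → Option T.V
  | 0, v => some v
  | n + 1, v => (T.par v).bind (parIter n)

lemma parIter_add (m n : ℕ) (v : T.V) :
    T.parIter (m + n) v = (T.parIter n v).bind (T.parIter m) := by
  induction n generalizing v with
  | zero => simp [parIter]
  | succ n ih =>
    show T.parIter (m + n + 1) v = _
    cases h : T.par v with
    | none => simp [parIter, h]
    | some u => simp [parIter, h, ih]

lemma rank_le_of_parIter {n : ℕ} {v w : T.V} (h : T.parIter n v = some w) :
    T.rank v ≤ T.rank w := by
  induction n generalizing v with
  | zero => simp [parIter] at h; subst h; rfl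
  | succ n ih =>
    rcases Option.bind_eq_some_iff.mp h with ⟨u, hu, hw⟩
    exact le_of_lt (lt_of_lt_of_le (T.rank_lt v u hu) (ih hw))

lemma rank_lt_of_parIter {n : ℕ} {v w : T.V} (h : T.parIter (n + 1) v = some w) :
    T.rank v < T.rank w := by
  rcases Option.bind_eq_some_iff.mp h with ⟨u, hu, hw⟩
  exact lt_of_lt_of_le (T.rank_lt v u hu) (T.rank_le_of_parIter hw)

/-- The set of descendants of `t` (including `t`). -/
def descSet (t : T.V) : Finset T.V :=
  Finset.univ.filter fun v => ∃ n, T.parIter n v = some t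

lemma self_mem_descSet (t : T.V) : t ∈ T.descSet t := by
  simp [descSet]; exact ⟨0, rfl⟩

lemma rank_le_of_mem_descSet {v t : T.V} (h : v ∈ T.descSet t) :
    T.rank v ≤ T.rank t := by
  simp [descSet] at h
  rcases h with ⟨n, hn⟩
  exact T.rank_le_of_parIter hn

lemma mem_descSet_step {v t : T.V} (h : v ∈ T.descSet t) (hne : v ≠ t) :
    ∃ s, T.par v = some s ∧ s ∈ T.descSet t := by
  simp only [descSet, Finset.mem_filter, Finset.mem_univ, true_and] at h ⊢
  rcases h with ⟨n, hn⟩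
  cases n with
  | zero => simp [parIter] at hn; exact absurd hn hne
  | succ m =>
    rcases Option.bind_eq_some_iff.mp hn with ⟨s, hs, hm⟩
    exact ⟨s, hs, m, hm⟩

lemma descSet_child_subset {q t : T.V} (hq : T.par q = some t) :
    T.descSet q ⊆ (T.descSet t).erase t := by
  intro v hv
  have hrank : T.rank v ≤ T.rank q := T.rank_le_of_mem_descSet hv
  simp only [descSet, Finset.mem_filter, Finset.mem_univ, true_and] at hv
  rcases hv with ⟨n, hn⟩
  have hmem : v ∈ T.descSet t := by
    simp only [descSet, Finset.mem_filter, Finset.mem_univ, true_and]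
    refine ⟨1 + n, ?_⟩
    rw [T.parIter_add 1 n, hn]
    simp [parIter, hq]
  refine Finset.mem_erase.mpr ⟨?_, hmem⟩
  intro hvt
  rw [hvt] at hrank
  exact absurd (lt_of_le_of_lt hrank (T.rank_lt q t hq)) (lt_irrefl _)

lemma eq_of_parIter_both {q q' t v : T.V} {n n' : ℕ}
    (hq : T.par q = some t) (hq' : T.par q' = some t) (hn : T.parIter n v = some q)
    (hn' : T.parIter n' v = some q') (hle : n ≤ n') : q = q' := by
  obtain ⟨d, rfl⟩ := Nat.exists_eq_add_of_le hle
  rw [Nat.add_comm, T.parIter_add d n, hn] at hn'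
  cases d with
  | zero => simp [parIter] at hn'; exact hn'
  | succ e =>
    exfalso
    have hstep : T.parIter (e + 1) q = some q' := hn'
    rcases Option.bind_eq_some_iff.mp hstep with ⟨u, hu, he⟩
    rw [hq] at hu
    obtain rfl : t = u := Option.some_inj.mp hu
    have h1 : T.rank t ≤ T.rank q' := T.rank_le_of_parIter he
    exact absurd (lt_of_le_of_lt h1 (T.rank_lt q' t hq')) (lt_irrefl _)

lemma descSet_disjoint {q q' t : T.V} (hq : T.par q = some t) (hq' : T.par q' = some t)
    (hne : q ≠ q') : Disjoint (T.descSet q) (T.descSet q') := by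
  rw [Finset.disjoint_left]
  intro v hv hv'
  simp only [descSet, Finset.mem_filter, Finset.mem_univ, true_and] at hv hv'
  rcases hv with ⟨n, hn⟩
  rcases hv' with ⟨n', hn'⟩
  rcases le_total n n' with h | h
  · exact hne (T.eq_of_parIter_both hq hq' hn hn' h)
  · exact hne (T.eq_of_parIter_both hq' hq hn' hn h).symm

lemma erase_descSet_eq_biUnion (t : T.V) :
    (T.descSet t).erase t = (T.children t).biUnion T.descSet := by
  ext v
  constructor
  · intro hv
    rcases Finset.mem_erase.mp hv with ⟨hne, hmem⟩
    simp only [descSet, Finset.mem_filter, Finset.mem_univ, true_and] at hmem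
    rcases hmem with ⟨n, hn⟩
    cases n with
    | zero => simp [parIter] at hn; exact absurd hn hne
    | succ m =>
      have : T.parIter (1 + m) v = some t := by rw [Nat.add_comm]; exact hn
      rw [T.parIter_add 1 m] at this
      rcases Option.bind_eq_some_iff.mp this with ⟨q, hqm, hq1⟩
      have hpar : T.par q = some t := by
        simpa [parIter] using hq1
      refine Finset.mem_biUnion.mpr ⟨q, ?_, ?_⟩
      · simp [children, hpar]
      · simp only [descSet, Finset.mem_filter, Finset.mem_univ, true_and]
        exact ⟨m, hqm⟩
  · intro hv
    rcases Finset.mem_biUnion.mp hv with ⟨q, hqc, hvq⟩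
    have hpar : T.par q = some t := by simpa [children] using hqc
    exact T.descSet_child_subset hpar hvq

lemma descSet_root_eq_univ : T.descSet T.root = Finset.univ := by
  have key : ∀ d v, Finset.univ.sup T.rank - T.rank v ≤ d →
      ∃ n, T.parIter n v = some T.root := by
    intro d
    induction d with
    | zero =>
      intro v hv
      by_cases hvr : v = T.root
      · subst hvr; exact ⟨0, rfl⟩
      · exfalso
        rcases Option.ne_none_iff_exists'.mp (T.par_of_ne_root v hvr) with ⟨s, hs⟩
        have h1 : T.rank v < T.rank s := T.rank_lt v s hs
        have h2 : T.rank s ≤ Finset.univ.sup T.rank := Finset.le_sup (Finset.mem_univ s)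
        omega
    | succ d ih =>
      intro v hv
      by_cases hvr : v = T.root
      · subst hvr; exact ⟨0, rfl⟩
      · rcases Option.ne_none_iff_exists'.mp (T.par_of_ne_root v hvr) with ⟨s, hs⟩
        have h1 : T.rank v < T.rank s := T.rank_lt v s hs
        have h2 : T.rank s ≤ Finset.univ.sup T.rank := Finset.le_sup (Finset.mem_univ s)
        rcases ih s (by omega) with ⟨n, hn⟩
        refine ⟨n + 1, ?_⟩
        simp [parIter, hs, hn]
  ext v
  simp only [descSet, Finset.mem_filter, Finset.mem_univ, true_and, iff_true]
  exact key _ v le_rfl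

/-- The weight of vertex `t` taking value `k` given parent value `j`. -/
def wgt (y : T.V → Option ℕ) (t : T.V) (j k : ℕ) : ℝ :=
  (match T.par t with
    | some _ => T.Pcond t k j
    | none => T.Proot k) * Indicator y t k

/-- The local factor of vertex `v` under total assignment `x`. -/
def factor (y : T.V → Option ℕ) (x : ∀ v, Fin (T.dom v)) (v : T.V) : ℝ :=
  (match T.par v with
    | some s => T.Pcond v (x v) (x s)
    | none => 1) * Indicator y v (x v)

lemma Indicator_nonneg (y : T.V → Option ℕ) (v : T.V) (k : ℕ) :
    0 ≤ Indicator y v k := by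
  unfold Indicator
  cases y v with
  | none => norm_num
  | some i => dsimp only; split <;> norm_num

lemma Indicator_zero_or_one (y : T.V → Option ℕ) (v : T.V) (k : ℕ) :
    Indicator y v k = 0 ∨ Indicator y v k = 1 := by
  unfold Indicator
  cases y v with
  | none => right; rfl
  | some i => dsimp only; split <;> simp

lemma wgt_nonneg (hT : T.IsProb) (y : T.V → Option ℕ) (t : T.V) (j k : ℕ) :
    0 ≤ T.wgt y t j k := by
  unfold wgt
  refine mul_nonneg ?_ (T.Indicator_nonneg y t k)
  cases T.par t with
  | some s => exact hT.cond_nonneg t k j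
  | none => exact hT.root_nonneg k

lemma factor_nonneg (hT : T.IsProb) (y : T.V → Option ℕ) (x : ∀ v, Fin (T.dom v))
    (v : T.V) : 0 ≤ T.factor y x v := by
  unfold factor
  refine mul_nonneg ?_ (T.Indicator_nonneg y v _)
  cases T.par v with
  | some s => exact hT.cond_nonneg v _ _
  | none => norm_num

lemma factor_eq {v s : T.V} (h : T.par v = some s) (y : T.V → Option ℕ)
    (x : ∀ v, Fin (T.dom v)) :
    T.factor y x v = T.Pcond v (x v) (x s) * Indicator y v (x v) := by
  unfold factor; rw [h]

lemma wgt_child {v s : T.V} (h : T.par v = some s) (y : T.V → Option ℕ) (j k : ℕ) :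
    T.wgt y v j k = T.Pcond v k j * Indicator y v k := by
  unfold wgt; rw [h]

lemma val_nonneg (hT : T.IsProb) (x : ∀ v, Fin (T.dom v)) : 0 ≤ T.val x := by
  refine mul_nonneg (hT.root_nonneg _) (Finset.prod_nonneg fun v _ => ?_)
  cases h : T.par v with
  | some s => simp only [h]; exact hT.cond_nonneg v _ _
  | none => simp only [h]; norm_num

lemma children_disjoint (t : T.V) :
    (↑(T.children t) : Set T.V).PairwiseDisjoint T.descSet := by
  intro a ha b hb hab
  simp only [children, Finset.coe_filter, Set.mem_setOf_eq, Finset.mem_univ, true_and]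
    at ha hb
  exact T.descSet_disjoint ha hb hab

lemma mem_children_iff {q t : T.V} : q ∈ T.children t ↔ T.par q = some t := by
  simp [children]

/-- Main lemma: the max-message from `t` equals the max over total assignments of the
product of factors in the subtree of `t`. -/
lemma maxMsgAux_eq (hT : T.IsProb) (y : T.V → Option ℕ) :
    ∀ n : ℕ, ∀ t : T.V, ∀ j : ℕ, T.rank t < n →
    T.maxMsgAux y n t j =
      (Finset.univ : Finset (∀ v, Fin (T.dom v))).sup' Finset.univ_nonempty
        (fun x => T.wgt y t j (x t) * ∏ v ∈ (T.descSet t).erase t, T.factor y x v) := by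
  intro n
  induction n with
  | zero => intro t j h; omega
  | succ m ih =>
    intro t j hlt
    have hchild : ∀ q ∈ T.children t, ∀ k : ℕ, T.maxMsgAux y m q k =
        (Finset.univ : Finset (∀ v, Fin (T.dom v))).sup' Finset.univ_nonempty
          (fun x => T.wgt y q k (x q) * ∏ v ∈ (T.descSet q).erase q, T.factor y x v) := by
      intro q hq k
      have hpq : T.par q = some t := T.mem_children_iff.mp hq
      exact ih q k (lt_of_lt_of_le (T.rank_lt q t hpq) (Nat.lt_succ_iff.mp hlt))
    have hunfold : T.maxMsgAux y (m + 1) t j =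
        (Finset.range (T.dom t)).sup'
          (Finset.nonempty_range_iff.mpr (T.dom_pos t).ne')
          (fun k => T.wgt y t j k * ∏ q ∈ T.children t, T.maxMsgAux y m q k) := rfl
    rw [hunfold]
    have hdisj := T.children_disjoint t
    apply le_antisymm
    · -- each k-term is attained by a combined assignment
      apply Finset.sup'_le
      intro k hk
      have hk' : k < T.dom t := Finset.mem_range.mp hk
      have hopt : ∀ q : T.V, ∃ x : ∀ v, Fin (T.dom v), q ∈ T.children t →
          T.maxMsgAux y m q k =
            T.wgt y q k (x q) * ∏ v ∈ (T.descSet q).erase q, T.factor y x v := by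
        intro q
        by_cases hq : q ∈ T.children t
        · obtain ⟨x, -, hx⟩ := Finset.exists_mem_eq_sup'
            (Finset.univ_nonempty (α := ∀ v, Fin (T.dom v)))
            (fun x => T.wgt y q k (x q) * ∏ v ∈ (T.descSet q).erase q, T.factor y x v)
          exact ⟨x, fun _ => by rw [hchild q hq k, hx]⟩
        · exact ⟨fun v => ⟨0, T.dom_pos v⟩, fun h => absurd h hq⟩
      choose xq hxq using hopt
      set x0 : ∀ v, Fin (T.dom v) := fun v =>
        if h : ∃ q, T.par q = some t ∧ v ∈ T.descSet q then xq h.choose v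
        else ⟨0, T.dom_pos v⟩ with hx0def
      set xs : ∀ v, Fin (T.dom v) := Function.update x0 t ⟨k, hk'⟩ with hxsdef
      have hxst : ((xs t : ℕ)) = k := by
        rw [hxsdef, Function.update_self]
      have hxs : ∀ q, T.par q = some t → ∀ v ∈ T.descSet q, xs v = xq q v := by
        intro q hpq v hv
        have hvt : v ≠ t := by
          intro h
          rw [h] at hv
          exact absurd (lt_of_le_of_lt (T.rank_le_of_mem_descSet hv) (T.rank_lt q t hpq))
            (lt_irrefl _)
        rw [hxsdef, Function.update_of_ne hvt, hx0def]
        have hex : ∃ q', T.par q' = some t ∧ v ∈ T.descSet q' := ⟨q, hpq, hv⟩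
        dsimp only
        rw [dif_pos hex]
        obtain ⟨hc1, hc2⟩ := hex.choose_spec
        by_cases hcq : hex.choose = q
        · rw [hcq]
        · exact absurd hv (Finset.disjoint_left.mp (T.descSet_disjoint hc1 hpq hcq) hc2)
      have h1 : ∀ q ∈ T.children t,
          T.maxMsgAux y m q k = ∏ v ∈ T.descSet q, T.factor y xs v := by
        intro q hq
        have hpq : T.par q = some t := T.mem_children_iff.mp hq
        rw [hxq q hq, ← Finset.mul_prod_erase _ _ (T.self_mem_descSet q)]
        congr 1
        · rw [T.factor_eq hpq, T.wgt_child hpq, hxs q hpq q (T.self_mem_descSet q), hxst]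
        · refine Finset.prod_congr rfl fun v hv => ?_
          obtain ⟨hvq, hvd⟩ := Finset.mem_erase.mp hv
          obtain ⟨s, hvs, hsd⟩ := T.mem_descSet_step hvd hvq
          rw [T.factor_eq hvs, T.factor_eq hvs, hxs q hpq v hvd, hxs q hpq s hsd]
      have key : T.wgt y t j k * ∏ q ∈ T.children t, T.maxMsgAux y m q k =
          T.wgt y t j (xs t) * ∏ v ∈ (T.descSet t).erase t, T.factor y xs v := by
        rw [hxst]
        congr 1
        rw [T.erase_descSet_eq_biUnion, Finset.prod_biUnion hdisj]
        exact Finset.prod_congr rfl h1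
      rw [key]
      exact Finset.le_sup'
        (fun x => T.wgt y t j (x t) * ∏ v ∈ (T.descSet t).erase t, T.factor y x v)
        (Finset.mem_univ xs)
    · apply Finset.sup'_le
      intro x _
      have hk' : ((x t : ℕ)) ∈ Finset.range (T.dom t) := Finset.mem_range.mpr (x t).isLt
      refine le_trans ?_ (Finset.le_sup' _ hk')
      rw [T.erase_descSet_eq_biUnion, Finset.prod_biUnion hdisj]
      refine mul_le_mul_of_nonneg_left ?_ (T.wgt_nonneg hT y t j _)
      refine Finset.prod_le_prod (fun q _ => Finset.prod_nonneg fun v _ =>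
        T.factor_nonneg hT y x v) (fun q hq => ?_)
      have hpq : T.par q = some t := T.mem_children_iff.mp hq
      rw [hchild q hq]
      refine le_trans (le_of_eq ?_) (Finset.le_sup' _ (Finset.mem_univ x))
      rw [← Finset.mul_prod_erase _ _ (T.self_mem_descSet q)]
      congr 1
      rw [T.factor_eq hpq, T.wgt_child hpq]

lemma rootExpr (y : T.V → Option ℕ) (x : ∀ v, Fin (T.dom v)) :
    T.wgt y T.root 0 (x T.root) *
        ∏ v ∈ (T.descSet T.root).erase T.root, T.factor y x v =
      T.val x * ∏ v, Indicator y v (x v) := by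
  rw [T.descSet_root_eq_univ]
  have hw : T.wgt y T.root 0 (x T.root) =
      T.Proot (x T.root) * Indicator y T.root (x T.root) := by
    unfold wgt; rw [T.par_root]
  have h1 : (∏ v : T.V, (match T.par v with
      | some s => T.Pcond v (x v) (x s)
      | none => (1 : ℝ))) =
      ∏ v ∈ Finset.univ.erase T.root, (match T.par v with
      | some s => T.Pcond v (x v) (x s)
      | none => (1 : ℝ)) := by
    rw [← Finset.mul_prod_erase _ _ (Finset.mem_univ T.root), T.par_root, one_mul]
  have h2 : (∏ v : T.V, Indicator y v (x v)) =
      Indicator y T.root (x T.root) * ∏ v ∈ Finset.univ.erase T.root,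
        Indicator y v (x v) :=
    (Finset.mul_prod_erase _ _ (Finset.mem_univ T.root)).symm
  unfold val factor
  rw [hw, Finset.prod_mul_distrib, h1, h2]
  ring

end TreeGM


/-- Let `T` be a directed tree graphical model on a finite rooted tree
and replace every sum over the domain in the message-passing recursion (including at the
root) by a maximum.  Then for every set of observed vertices with (in-domain) assignment
`y`, the resulting root value is the maximum of `T(x)` over all total assignments `x`
whose restriction to the observed vertices equals `y`: max-product message passing
computes the value of the MAP query. -/
theorem treegm_max_product_computes_map (T : TreeGM) (hT : T.IsProb)
    (y : T.V → Option ℕ) (hy : ∀ v i, y v = some i → i < T.dom v) :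
    IsGreatest
      {r : ℝ | ∃ x : ∀ v : T.V, Fin (T.dom v),
        (∀ (v : T.V) (i : ℕ), y v = some i → (x v : ℕ) = i) ∧ r = T.val x}
      (T.maxRootValue y) := by
  classical
  have hmain := T.maxMsgAux_eq hT y (T.rank T.root + 1) T.root 0 (Nat.lt_succ_self _)
  have hroot : T.maxRootValue y =
      (Finset.univ : Finset (∀ v, Fin (T.dom v))).sup' Finset.univ_nonempty
        (fun x => T.val x * ∏ v, Indicator y v (x v)) := by
    rw [TreeGM.maxRootValue, hmain]
    exact Finset.sup'_congr _ rfl (fun x _ => T.rootExpr y x)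
  have hub : ∀ x : ∀ v, Fin (T.dom v),
      (∀ v i, y v = some i → (x v : ℕ) = i) → T.val x ≤ T.maxRootValue y := by
    intro x hcons
    rw [hroot]
    have hind : (∏ v, Indicator y v (x v)) = 1 := by
      refine Finset.prod_eq_one fun v _ => ?_
      unfold Indicator
      cases hyv : y v with
      | none => rfl
      | some i => simp [hcons v i hyv]
    calc T.val x = T.val x * ∏ v, Indicator y v (x v) := by rw [hind, mul_one]
      _ ≤ _ := Finset.le_sup'
          (fun x => T.val x * ∏ v, Indicator y v (x v)) (Finset.mem_univ x)
  constructor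
  · obtain ⟨x0, -, hx0⟩ := Finset.exists_mem_eq_sup'
      (Finset.univ_nonempty (α := ∀ v, Fin (T.dom v)))
      (fun x => T.val x * ∏ v, Indicator y v (x v))
    by_cases hz : ∃ v, Indicator y v (x0 v) = 0
    · have hP : (∏ v, Indicator y v (x0 v)) = 0 := by
        obtain ⟨v, hv⟩ := hz
        exact Finset.prod_eq_zero (Finset.mem_univ v) hv
      have hval0 : T.maxRootValue y = 0 := by rw [hroot, hx0, hP, mul_zero]
      set x1 : ∀ v, Fin (T.dom v) := fun v =>
        if h : ∃ i, y v = some i then ⟨h.choose, hy v h.choose h.choose_spec⟩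
        else ⟨0, T.dom_pos v⟩ with hx1def
      have hcons1 : ∀ v i, y v = some i → (x1 v : ℕ) = i := by
        intro v i hyv
        have hex : ∃ i', y v = some i' := ⟨i, hyv⟩
        rw [hx1def]
        dsimp only
        rw [dif_pos hex]
        exact (Option.some_inj.mp (hyv.symm.trans hex.choose_spec)).symm
      refine ⟨x1, hcons1, ?_⟩
      have hle := hub x1 hcons1
      rw [hval0] at hle ⊢
      exact le_antisymm (T.val_nonneg hT x1) hle |>.symm ▸
        (le_antisymm hle (T.val_nonneg hT x1)).symm
    · push_neg at hz
      have hall : ∀ v, Indicator y v (x0 v) = 1 := fun v =>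
        (T.Indicator_zero_or_one y v (x0 v)).resolve_left (hz v)
      have hcons0 : ∀ v i, y v = some i → (x0 v : ℕ) = i := by
        intro v i hyv
        have h1 := hall v
        unfold Indicator at h1
        rw [hyv] at h1
        dsimp only at h1
        by_cases hi : i = ((x0 v : ℕ))
        · exact hi.symm
        · rw [if_neg hi] at h1; norm_num at h1
      exact ⟨x0, hcons0, by
        rw [hroot, hx0, Finset.prod_eq_one (fun v _ => hall v), mul_one]⟩
  · rintro r ⟨x, hc, rfl⟩
    exact hub x hc
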